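/- Let X be a non-empty compact subset of ℝ^d with diameter diam(X) = sup_{x,y∈X} ‖x−y‖. Then there exists x̄ ∈ ℝ^d such that X is contained in the closed Euclidean ball of radius diam(X)·√d/√(2d+2) centered at x̄, and consequently X ⊆ Π_{i=1}^d [x̄_i − d·diam(X)/√(2d+2), x̄_i + d·diam(X)/√(2d+2)]. -/

import Mathlib

open Finset Metric RealInnerProductSpace

lemma jung_center {d : ℕ} (S : Finset (EuclideanSpace ℝ (Fin d))) (hS : S.Nonempty) :
    ∃ (c : EuclideanSpace ℝ (Fin d)) (r : ℝ) (w : (EuclideanSpace ℝ (Fin d)) → ℝ),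
      0 ≤ r ∧ (∀ x ∈ S, dist x c ≤ r) ∧
      (∀ y ∈ S, 0 ≤ w y) ∧ (∑ y ∈ S, w y) = 1 ∧
      (∑ y ∈ S, w y • y) = c ∧
      (∀ y ∈ S, w y ≠ 0 → dist y c = r) := by
  classical
  set K : Set (EuclideanSpace ℝ (Fin d)) := convexHull ℝ ↑S with hK
  have hKcpt : IsCompact K := S.finite_toSet.isCompact_convexHull (𝕜 := ℝ)
  obtain ⟨x₀, hx₀⟩ := id hS
  have hKne : K.Nonempty := ⟨x₀, subset_convexHull ℝ _ hx₀⟩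
  -- the radius function
  set f : (EuclideanSpace ℝ (Fin d)) → ℝ := fun c => S.sup' hS (fun x => dist x c) with hf
  have hfcont : Continuous f := by
    apply Continuous.finset_sup'_apply hS
    exact fun i _ => Continuous.dist continuous_const continuous_id
  obtain ⟨c, hcK, hcmin⟩ := hKcpt.exists_isMinOn hKne hfcont.continuousOn
  set r : ℝ := f c with hr
  have hrle : ∀ x ∈ S, dist x c ≤ r := fun x hx => Finset.le_sup' (fun x => dist x c) hx
  have hr0 : 0 ≤ r := le_trans dist_nonneg (hrle x₀ hx₀)
  -- contact set
  set T : Finset (EuclideanSpace ℝ (Fin d)) := S.filter (fun x => dist x c = r) with hT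
  have hTne : T.Nonempty := by
    obtain ⟨x, hx, hxe⟩ := Finset.exists_mem_eq_sup' hS (fun x => dist x c)
    exact ⟨x, Finset.mem_filter.2 ⟨hx, hxe.symm⟩⟩
  have hTsub : (T : Set (EuclideanSpace ℝ (Fin d))) ⊆ ↑S := by
    exact_mod_cast Finset.filter_subset _ _
  -- claim: c in convex hull of T
  have hchull : c ∈ convexHull ℝ (T : Set (EuclideanSpace ℝ (Fin d))) := by
    by_contra hc
    set H : Set (EuclideanSpace ℝ (Fin d)) := convexHull ℝ ↑T with hH
    have hHconv : Convex ℝ H := convex_convexHull _ _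
    have hHcpt : IsCompact H := T.finite_toSet.isCompact_convexHull (𝕜 := ℝ)
    have hHne : H.Nonempty := ⟨hTne.choose, subset_convexHull ℝ _ hTne.choose_spec⟩
    obtain ⟨p, hpH, hpmin⟩ := exists_norm_eq_iInf_of_complete_convex hHne
      hHcpt.isClosed.isComplete hHconv c
    have hproj : ∀ q ∈ H, ⟪c - p, q - p⟫ ≤ 0 :=
      (norm_eq_iInf_iff_real_inner_le_zero hHconv hpH).1 hpmin
    have hpc : p ≠ c := fun h => hc (h ▸ hpH)
    have hpc0 : 0 < ‖p - c‖ := by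
      rwa [norm_pos_iff, sub_ne_zero]
    -- key inner product bound for contact points
    have hkey : ∀ x ∈ T, ‖p - c‖ ^ 2 ≤ ⟪x - c, p - c⟫ := by
      intro x hx
      have h1 : ⟪c - p, x - p⟫ ≤ 0 := hproj x (subset_convexHull ℝ _ hx)
      have : ⟪x - c, p - c⟫ = ⟪x - p, p - c⟫ + ‖p - c‖ ^ 2 := by
        rw [show x - c = (x - p) + (p - c) by abel, inner_add_left, real_inner_self_eq_norm_sq]
      rw [this]
      have h2 : ⟪x - p, p - c⟫ = -⟪c - p, x - p⟫ := by
        rw [show p - c = -(c - p) from by abel, inner_neg_right, real_inner_comm]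
      nlinarith [h2]
    -- choose step size
    set g : (EuclideanSpace ℝ (Fin d)) → ℝ :=
      fun x => if dist x c = r then 1 else (r - dist x c) / (2 * ‖p - c‖) with hg
    set δ : ℝ := min 1 (S.inf' hS g) with hδ
    have hgpos : ∀ x ∈ S, 0 < g x := by
      intro x hx
      by_cases hxc : dist x c = r
      · simp [hg, hxc]
      · have : dist x c < r := lt_of_le_of_ne (hrle x hx) hxc
        simp only [hg, if_neg hxc]
        apply div_pos (by linarith) (by positivity)
    have hδpos : 0 < δ := lt_min one_pos (by
      obtain ⟨x, hx, hxe⟩ := Finset.exists_mem_eq_inf' hS g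
      rw [hxe]; exact hgpos x hx)
    have hδ1 : δ ≤ 1 := min_le_left _ _
    set c' : EuclideanSpace ℝ (Fin d) := c + δ • (p - c) with hc'
    have hc'K : c' ∈ K := by
      have : c' = (1 - δ) • c + δ • p := by
        rw [hc']; module
      rw [this]
      exact (convex_convexHull ℝ _) hcK (convexHull_mono hTsub hpH) (by linarith) hδpos.le
        (by ring)
    have hlt : ∀ x ∈ S, dist x c' < r := by
      intro x hx
      by_cases hxT : dist x c = r
      · -- contact point: use inner product bound
        have hxT' : x ∈ T := Finset.mem_filter.2 ⟨hx, hxT⟩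
        have h2 : ‖x - c'‖ ^ 2 = ‖x - c‖ ^ 2 - 2 * δ * ⟪x - c, p - c⟫ + δ ^ 2 * ‖p - c‖ ^ 2 := by
          have : x - c' = (x - c) - δ • (p - c) := by rw [hc']; abel
          rw [this, norm_sub_sq_real, real_inner_smul_right, norm_smul]
          simp [mul_pow, abs_of_nonneg hδpos.le]
          ring
        have h3 : ‖x - c'‖ ^ 2 < r ^ 2 := by
          have := hkey x hxT'
          have hxc : ‖x - c‖ = r := by rwa [← dist_eq_norm]
          rw [h2, hxc]
          have hA : 2 * δ * ‖p - c‖ ^ 2 ≤ 2 * δ * ⟪x - c, p - c⟫ :=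
            mul_le_mul_of_nonneg_left this (by positivity)
          have hδ2 : δ ^ 2 ≤ δ := by nlinarith [hδpos, hδ1]
          have hB : δ ^ 2 * ‖p - c‖ ^ 2 ≤ δ * ‖p - c‖ ^ 2 :=
            mul_le_mul_of_nonneg_right hδ2 (sq_nonneg _)
          have hC : 0 < δ * ‖p - c‖ ^ 2 := by positivity
          linarith
        have : dist x c' = ‖x - c'‖ := dist_eq_norm _ _
        rw [this]
        exact lt_of_pow_lt_pow_left₀ 2 hr0 h3
      · -- non-contact point: distance moved is small
        have hxr : dist x c < r := lt_of_le_of_ne (hrle x hx) hxT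
        have hδg : δ ≤ (r - dist x c) / (2 * ‖p - c‖) := by
          calc δ ≤ S.inf' hS g := min_le_right _ _
          _ ≤ g x := Finset.inf'_le g hx
          _ = _ := by rw [hg]; simp [hxT]
        have hmove : dist c' c = δ * ‖p - c‖ := by
          rw [hc', dist_eq_norm]
          simp [norm_smul, abs_of_nonneg hδpos.le]
        calc dist x c' ≤ dist x c + dist c c' := dist_triangle _ _ _
        _ = dist x c + δ * ‖p - c‖ := by rw [dist_comm c c', hmove]
        _ ≤ dist x c + (r - dist x c) / (2 * ‖p - c‖) * ‖p - c‖ := by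
            gcongr
        _ = dist x c + (r - dist x c) / 2 := by field_simp
        _ < r := by linarith
    have h5 : f c' < r := (Finset.sup'_lt_iff hS).2 hlt
    have h6 : r ≤ f c' := hcmin hc'K
    exact absurd h5 (not_lt.2 h6)
  -- extract weights
  rw [Finset.convexHull_eq] at hchull
  obtain ⟨w, hw0, hw1, hwc⟩ := hchull
  refine ⟨c, r, fun y => if y ∈ T then w y else 0, hr0, hrle, ?_, ?_, ?_, ?_⟩
  · intro y hy
    by_cases h : y ∈ T
    · simpa [h] using hw0 y h
    · simp [h]
  · rw [Finset.sum_ite_mem, Finset.inter_eq_right.2 (Finset.filter_subset _ _), ← hw1]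
  · have hcm : (∑ y ∈ T, w y • y) = c := by
      rw [← hwc, Finset.centerMass_eq_of_sum_1 _ _ hw1]
      rfl
    rw [← hcm]
    rw [show (∑ y ∈ S, (if y ∈ T then w y else 0) • y)
        = ∑ y ∈ S, (if y ∈ T then w y • y else 0) from
      Finset.sum_congr rfl (fun y _ => by split <;> simp)]
    rw [Finset.sum_ite_mem, Finset.inter_eq_right.2 (Finset.filter_subset _ _)]
  · intro y hy hwy
    have : y ∈ T := by by_contra h; simp [h] at hwy
    exact (Finset.mem_filter.1 this).2

lemma jung_finset {d : ℕ} (hd : 0 < d) (S : Finset (EuclideanSpace ℝ (Fin d)))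
    (hS : S.Nonempty) (hcard : S.card ≤ d + 1) {D : ℝ} (hD : 0 ≤ D)
    (hdist : ∀ x ∈ S, ∀ y ∈ S, dist x y ≤ D) :
    ∃ c, ∀ x ∈ S, dist x c ≤ D * Real.sqrt d / Real.sqrt (2 * d + 2) := by
  classical
  obtain ⟨c, r, w, hr0, hrle, hw0, hw1, hwc, hcontact⟩ := jung_center S hS
  refine ⟨c, fun x hx => ?_⟩
  -- it suffices to bound r
  have hmain : r ^ 2 ≤ D ^ 2 * d / (2 * d + 2) := by
    -- the weighted sum of the centered points vanishes
    have hzero : (∑ i ∈ S, w i • (i - c)) = 0 := by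
      have : (∑ i ∈ S, w i • (i - c)) = (∑ i ∈ S, w i • i) - (∑ i ∈ S, w i) • c := by
        rw [Finset.sum_smul, ← Finset.sum_sub_distrib]
        exact Finset.sum_congr rfl (fun i _ => smul_sub _ _ _)
      rw [this, hwc, hw1, one_smul, sub_self]
    have hinner : ∀ j : EuclideanSpace ℝ (Fin d),
        (∑ i ∈ S, w i * ⟪i - c, j - c⟫) = 0 := by
      intro j
      have : (∑ i ∈ S, w i * ⟪i - c, j - c⟫) = ⟪∑ i ∈ S, w i • (i - c), j - c⟫ := by
        rw [sum_inner]
        exact Finset.sum_congr rfl (fun i _ => (real_inner_smul_left _ _ _).symm)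
      rw [this, hzero, inner_zero_left]
    have hwr : ∀ i ∈ S, w i * ‖i - c‖ ^ 2 = w i * r ^ 2 := by
      intro i hi
      by_cases h : w i = 0
      · simp [h]
      · rw [← dist_eq_norm, hcontact i hi h]
    have hsumwr : (∑ i ∈ S, w i * ‖i - c‖ ^ 2) = r ^ 2 := by
      rw [Finset.sum_congr rfl hwr, ← Finset.sum_mul, hw1, one_mul]
    -- identity: for j in the support, the weighted sum of squared dists to j is 2r²
    have hA : ∀ j ∈ S, w j ≠ 0 → (∑ i ∈ S, w i * ‖i - j‖ ^ 2) = 2 * r ^ 2 := by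
      intro j hj hwj
      have hexp : ∀ i ∈ S, w i * ‖i - j‖ ^ 2
          = w i * ‖i - c‖ ^ 2 + w i * ‖j - c‖ ^ 2 - 2 * (w i * ⟪i - c, j - c⟫) := by
        intro i _
        have : i - j = (i - c) - (j - c) := by abel
        rw [this, norm_sub_sq_real]
        ring
      rw [Finset.sum_congr rfl hexp, Finset.sum_sub_distrib, Finset.sum_add_distrib,
        ← Finset.mul_sum, hinner, hsumwr, ← Finset.sum_mul, hw1]
      have : ‖j - c‖ = r := by rw [← dist_eq_norm]; exact hcontact j hj hwj
      rw [this]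
      ring
    -- bound: the weighted sum of squared dists to j is at most (1 - w j) D²
    have hB : ∀ j ∈ S, (∑ i ∈ S, w i * ‖i - j‖ ^ 2) ≤ (1 - w j) * D ^ 2 := by
      intro j hj
      rw [← Finset.sum_erase_add _ _ hj]
      have h1 : w j * ‖j - j‖ ^ 2 = 0 := by simp
      rw [h1, add_zero]
      calc (∑ i ∈ S.erase j, w i * ‖i - j‖ ^ 2)
          ≤ ∑ i ∈ S.erase j, w i * D ^ 2 := by
            apply Finset.sum_le_sum
            intro i hi
            have hiS : i ∈ S := Finset.mem_of_mem_erase hi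
            have : ‖i - j‖ ≤ D := by rw [← dist_eq_norm]; exact hdist i hiS j hj
            have h2 : ‖i - j‖ ^ 2 ≤ D ^ 2 := by nlinarith [norm_nonneg (i - j)]
            exact mul_le_mul_of_nonneg_left h2 (hw0 i hiS)
        _ = (1 - w j) * D ^ 2 := by
            rw [← Finset.sum_mul, Finset.sum_erase_eq_sub hj, hw1]
    -- combine
    have hcs : 1 ≤ ((d : ℝ) + 1) * ∑ j ∈ S, w j ^ 2 := by
      have h1 : (∑ j ∈ S, w j) ^ 2 ≤ (S.card : ℝ) * ∑ j ∈ S, w j ^ 2 := by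
        exact_mod_cast sq_sum_le_card_mul_sum_sq (s := S) (f := w)
      have h2 : (S.card : ℝ) ≤ (d : ℝ) + 1 := by exact_mod_cast hcard
      have h3 : 0 ≤ ∑ j ∈ S, w j ^ 2 := Finset.sum_nonneg (fun j _ => sq_nonneg _)
      rw [hw1] at h1
      nlinarith
    have hsum : 2 * r ^ 2 ≤ (1 - ∑ j ∈ S, w j ^ 2) * D ^ 2 := by
      have hterm : ∀ j ∈ S, w j * (2 * r ^ 2) ≤ (w j * (1 - w j)) * D ^ 2 := by
        intro j hj
        by_cases h : w j = 0
        · simp [h]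
        · have := (hA j hj h) ▸ hB j hj
          have hwj := hw0 j hj
          nlinarith
      calc 2 * r ^ 2 = ∑ j ∈ S, w j * (2 * r ^ 2) := by rw [← Finset.sum_mul, hw1, one_mul]
        _ ≤ ∑ j ∈ S, (w j * (1 - w j)) * D ^ 2 := Finset.sum_le_sum hterm
        _ = (1 - ∑ j ∈ S, w j ^ 2) * D ^ 2 := by
            rw [← Finset.sum_mul]
            congr 1
            rw [show (∑ j ∈ S, w j * (1 - w j)) = (∑ j ∈ S, w j) - ∑ j ∈ S, w j ^ 2 by
              rw [← Finset.sum_sub_distrib]; exact Finset.sum_congr rfl (fun j _ => by ring),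
              hw1]
    have hd1 : (0:ℝ) < (d : ℝ) + 1 := by positivity
    have hq : 0 ≤ ∑ j ∈ S, w j ^ 2 := Finset.sum_nonneg (fun j _ => sq_nonneg _)
    have hD2 : 0 ≤ D ^ 2 := sq_nonneg D
    -- 2 r² ≤ (1 - 1/(d+1)) D² = d/(d+1) D²
    have h4 : (1 - ∑ j ∈ S, w j ^ 2) ≤ (d : ℝ) / ((d : ℝ) + 1) := by
      rw [le_div_iff₀ hd1]
      nlinarith
    have h5 : 2 * r ^ 2 ≤ (d : ℝ) / ((d : ℝ) + 1) * D ^ 2 :=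
      le_trans hsum (mul_le_mul_of_nonneg_right h4 hD2)
    have h6 : 2 * r ^ 2 * ((d : ℝ) + 1) ≤ (d : ℝ) * D ^ 2 := by
      rw [div_mul_eq_mul_div, le_div_iff₀ hd1] at h5
      linarith
    rw [le_div_iff₀ (show (0:ℝ) < 2 * (d:ℝ) + 2 by positivity)]
    nlinarith [h6]
  -- conclude
  have hrhs0 : 0 ≤ D * Real.sqrt d / Real.sqrt (2 * d + 2) := by positivity
  have hsq : (D * Real.sqrt d / Real.sqrt (2 * d + 2)) ^ 2 = D ^ 2 * d / (2 * d + 2) := by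
    rw [div_pow, mul_pow, Real.sq_sqrt (by positivity : (0:ℝ) ≤ (d:ℝ)),
      Real.sq_sqrt (by positivity : (0:ℝ) ≤ 2 * (d:ℝ) + 2)]
  have h7 : r ^ 2 ≤ (D * Real.sqrt d / Real.sqrt (2 * d + 2)) ^ 2 := hmain.trans_eq hsq.symm
  have h8 : r ≤ D * Real.sqrt d / Real.sqrt (2 * d + 2) :=
    le_of_pow_le_pow_left₀ two_ne_zero hrhs0 h7
  exact (hrle x hx).trans h8

lemma coord_abs_le_norm {d : ℕ} (v : EuclideanSpace ℝ (Fin d)) (i : Fin d) :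
    |v i| ≤ ‖v‖ := by
  rw [EuclideanSpace.norm_eq]
  have h1 : |v i| ^ 2 ≤ ∑ j, ‖v j‖ ^ 2 := by
    have := Finset.single_le_sum (f := fun j => ‖v j‖ ^ 2)
      (fun j _ => sq_nonneg _) (Finset.mem_univ i)
    simpa [Real.norm_eq_abs, sq_abs] using this
  calc |v i| = Real.sqrt (|v i| ^ 2) := (Real.sqrt_sq (abs_nonneg _)).symm
    _ ≤ _ := Real.sqrt_le_sqrt h1


/-- Jung's theorem in `ℝ^d` plus the norm comparison: a nonempty compact
`X ⊆ ℝ^d` is contained in a closed Euclidean ball of radius `diam(X)·√d/√(2d+2)`, and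
hence in the cube of half-width `d·diam(X)/√(2d+2)` around the same center. -/
theorem stmt12 {d : ℕ} (hd : 0 < d) (X : Set (EuclideanSpace ℝ (Fin d)))
    (hXne : X.Nonempty) (hXcpt : IsCompact X) :
    ∃ c : EuclideanSpace ℝ (Fin d),
      X ⊆ Metric.closedBall c (Metric.diam X * Real.sqrt d / Real.sqrt (2 * d + 2)) ∧
      ∀ x ∈ X, ∀ i : Fin d,
        |x i - c i| ≤ d * Metric.diam X / Real.sqrt (2 * d + 2) := by
  classical
  set ρ : ℝ := Metric.diam X * Real.sqrt d / Real.sqrt (2 * d + 2) with hρ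
  have hρ0 : 0 ≤ ρ := by positivity
  -- Helly's theorem applied to the closed balls of radius ρ around points of X
  have hHelly : (⋂ x : X, Metric.closedBall (x : EuclideanSpace ℝ (Fin d)) ρ).Nonempty := by
    apply Convex.helly_theorem_compact' (𝕜 := ℝ)
      (fun x => convex_closedBall _ _) (fun x => isCompact_closedBall _ _)
    intro I hI
    rcases I.eq_empty_or_nonempty with rfl | hIne
    · simp
    set S : Finset (EuclideanSpace ℝ (Fin d)) := I.image Subtype.val with hSdef
    have hSne : S.Nonempty := hIne.image _
    have hScard : S.card ≤ d + 1 := by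
      calc S.card ≤ I.card := Finset.card_image_le
        _ ≤ d + 1 := by
          rwa [finrank_euclideanSpace_fin] at hI
    have hSX : ∀ x ∈ S, x ∈ X := by
      intro x hx
      obtain ⟨y, _, rfl⟩ := Finset.mem_image.1 hx
      exact y.2
    obtain ⟨c, hc⟩ := jung_finset hd S hSne hScard Metric.diam_nonneg
      (fun x hx y hy => Metric.dist_le_diam_of_mem hXcpt.isBounded (hSX x hx) (hSX y hy))
    refine ⟨c, Set.mem_iInter₂.2 fun i hi => ?_⟩
    rw [Metric.mem_closedBall, dist_comm]
    exact hc i (Finset.mem_image_of_mem _ hi)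
  obtain ⟨c, hc⟩ := hHelly
  have hball : ∀ x ∈ X, dist x c ≤ ρ := by
    intro x hx
    have := Set.mem_iInter.1 hc ⟨x, hx⟩
    rw [Metric.mem_closedBall] at this
    rwa [dist_comm]
  refine ⟨c, fun x hx => Metric.mem_closedBall.2 (hball x hx), fun x hx i => ?_⟩
  have h1 : |x i - c i| ≤ dist x c := by
    have h2 : |(x - c) i| ≤ ‖x - c‖ := coord_abs_le_norm _ i
    rw [dist_eq_norm]
    simpa using h2
  have h3 : ρ ≤ d * Metric.diam X / Real.sqrt (2 * d + 2) := by
    rw [hρ]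
    have hsd : Real.sqrt d ≤ d := by
      calc Real.sqrt d ≤ Real.sqrt ((d : ℝ) ^ 2) := by
            apply Real.sqrt_le_sqrt
            have : (1:ℝ) ≤ d := by exact_mod_cast hd
            nlinarith
        _ = d := Real.sqrt_sq (by positivity)
    rw [div_le_div_iff₀ (by positivity) (by positivity)]
    have hdm := Metric.diam_nonneg (s := X)
    nlinarith [mul_le_mul_of_nonneg_right
      (mul_le_mul_of_nonneg_left hsd hdm) (Real.sqrt_nonneg (2 * (d:ℝ) + 2))]
  exact (h1.trans (hball x hx)).trans h3
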